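/- For finite probability measures μ and ν on a finite metric space, if the training points are partitioned into batches and the validation points into batches, then the hierarchical optimal transport cost HOT(μ, ν) — defined as the optimal transport cost between the uniform measures over batches, with ground cost between two batches given by the optimal transport cost between the uniform measures on the points of those batches — is greater than or equal to the optimal transport cost OT(μ, ν) between the original uniform measures. -/

import Mathlib

open Finset

/-- A coupling between finite measures `μ` and `ν` given as weight functions. -/
def IsCoupling {ι κ : Type*} [Fintype ι] [Fintype κ]
    (μ : ι → ℝ) (ν : κ → ℝ) (π : ι → κ → ℝ) : Prop :=
  (∀ i j, 0 ≤ π i j) ∧ (∀ i, ∑ j, π i j = μ i) ∧ (∀ j, ∑ i, π i j = ν j)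

/-- Discrete optimal transport cost between `μ` and `ν` for ground cost `C`. -/
noncomputable def OTcost {ι κ : Type*} [Fintype ι] [Fintype κ]
    (μ : ι → ℝ) (ν : κ → ℝ) (C : ι → κ → ℝ) : ℝ :=
  sInf {c : ℝ | ∃ π : ι → κ → ℝ, IsCoupling μ ν π ∧ c = ∑ i, ∑ j, π i j * C i j}

/-- The uniform probability vector on a finite type. -/
noncomputable def unif (ι : Type*) [Fintype ι] : ι → ℝ :=
  fun _ => 1 / (Fintype.card ι : ℝ)

lemma unif_nonneg' {ι : Type*} [Fintype ι] (i : ι) : 0 ≤ unif ι i := by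
  unfold unif; positivity

lemma sum_unif {ι : Type*} [Fintype ι] [Nonempty ι] : ∑ i, unif ι i = 1 := by
  have h : (Fintype.card ι : ℝ) ≠ 0 := by
    exact_mod_cast Fintype.card_ne_zero
  simp only [unif, Finset.sum_const, Finset.card_univ, nsmul_eq_mul, mul_one_div]
  exact div_self h

lemma prod_coupling {ι κ : Type*} [Fintype ι] [Fintype κ] [Nonempty ι] [Nonempty κ] :
    IsCoupling (unif ι) (unif κ) (fun i j => unif ι i * unif κ j) := by
  refine ⟨fun i j => mul_nonneg (unif_nonneg' i) (unif_nonneg' j), ?_, ?_⟩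
  · intro i
    rw [← Finset.mul_sum, sum_unif, mul_one]
  · intro j
    rw [← Finset.sum_mul, sum_unif, one_mul]

lemma OT_bddBelow {ι κ : Type*} [Fintype ι] [Fintype κ]
    (μ : ι → ℝ) (ν : κ → ℝ) (C : ι → κ → ℝ) (hC : ∀ i j, 0 ≤ C i j) :
    (0 : ℝ) ∈ lowerBounds
      {c : ℝ | ∃ π : ι → κ → ℝ, IsCoupling μ ν π ∧ c = ∑ i, ∑ j, π i j * C i j} := by
  rintro c ⟨π, ⟨hpos, -, -⟩, rfl⟩
  refine Finset.sum_nonneg fun i _ => Finset.sum_nonneg fun j _ => ?_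
  exact mul_nonneg (hpos i j) (hC i j)

lemma OTcost_le_of_coupling {ι κ : Type*} [Fintype ι] [Fintype κ]
    {μ : ι → ℝ} {ν : κ → ℝ} {C : ι → κ → ℝ} (hC : ∀ i j, 0 ≤ C i j)
    {π : ι → κ → ℝ} (hπ : IsCoupling μ ν π) :
    OTcost μ ν C ≤ ∑ i, ∑ j, π i j * C i j :=
  csInf_le ⟨0, OT_bddBelow μ ν C hC⟩ ⟨π, hπ, rfl⟩

/-- hierarchical OT (batch-level OT with within-batch OT ground cost)
upper-bounds the ordinary OT between the uniform empirical measures. -/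
theorem ot_le_hot (Kt Kv b b' : ℕ) (hKt : 0 < Kt) (hKv : 0 < Kv)
    (hb : 0 < b) (hb' : 0 < b')
    (C : (Fin Kt × Fin b) → (Fin Kv × Fin b') → ℝ) (hC : ∀ p q, 0 ≤ C p q) :
    OTcost (unif (Fin Kt × Fin b)) (unif (Fin Kv × Fin b')) C ≤
      OTcost (unif (Fin Kt)) (unif (Fin Kv))
        (fun i j => OTcost (unif (Fin b)) (unif (Fin b'))
          (fun k l => C (i, k) (j, l))) := by
  have : Nonempty (Fin Kt) := ⟨⟨0, hKt⟩⟩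
  have : Nonempty (Fin Kv) := ⟨⟨0, hKv⟩⟩
  have : Nonempty (Fin b) := ⟨⟨0, hb⟩⟩
  have : Nonempty (Fin b') := ⟨⟨0, hb'⟩⟩
  -- the HOT feasible set is nonempty
  refine le_csInf ⟨_, (fun i j => unif (Fin Kt) i * unif (Fin Kv) j), prod_coupling, rfl⟩ ?_
  rintro c ⟨P, ⟨hPpos, hP1, hP2⟩, rfl⟩
  refine le_of_forall_pos_le_add fun ε hε => ?_
  -- pick ε-optimal inner couplings
  have hinner : ∀ (i : Fin Kt) (j : Fin Kv), ∃ π : Fin b → Fin b' → ℝ,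
      IsCoupling (unif (Fin b)) (unif (Fin b')) π ∧
      ∑ k, ∑ l, π k l * C (i, k) (j, l) <
        OTcost (unif (Fin b)) (unif (Fin b')) (fun k l => C (i, k) (j, l)) + ε := by
    intro i j
    have hne : {c : ℝ | ∃ π : Fin b → Fin b' → ℝ,
        IsCoupling (unif (Fin b)) (unif (Fin b')) π ∧
        c = ∑ k, ∑ l, π k l * C (i, k) (j, l)}.Nonempty :=
      ⟨_, (fun k l => unif (Fin b) k * unif (Fin b') l), prod_coupling, rfl⟩
    obtain ⟨x, ⟨π, hπ, rfl⟩, hx⟩ := Real.lt_sInf_add_pos hne hε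
    exact ⟨π, hπ, hx⟩
  choose π hπc hπlt using hinner
  -- glue
  set Pf : (Fin Kt × Fin b) → (Fin Kv × Fin b') → ℝ :=
    fun p q => P p.1 q.1 * π p.1 q.1 p.2 q.2 with hPf
  have hcard : (Fintype.card (Fin Kt × Fin b) : ℝ) = (Kt : ℝ) * b := by
    simp [Fintype.card_prod]
  have hcard' : (Fintype.card (Fin Kv × Fin b') : ℝ) = (Kv : ℝ) * b' := by
    simp [Fintype.card_prod]
  have hPfc : IsCoupling (unif (Fin Kt × Fin b)) (unif (Fin Kv × Fin b')) Pf := by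
    refine ⟨fun p q => mul_nonneg (hPpos _ _) ((hπc _ _).1 _ _), ?_, ?_⟩
    · rintro ⟨i, k⟩
      rw [Fintype.sum_prod_type]
      have : ∀ j : Fin Kv, ∑ l, Pf (i, k) (j, l) = P i j * unif (Fin b) k := by
        intro j
        rw [show ∑ l, Pf (i, k) (j, l) = P i j * ∑ l, π i j k l by
          rw [Finset.mul_sum], (hπc i j).2.1 k]
      simp only [this]
      rw [← Finset.sum_mul, hP1 i]
      simp only [unif, hcard]
      have h1 : (Kt : ℝ) ≠ 0 := by positivity
      have h2 : (b : ℝ) ≠ 0 := by positivity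
      field_simp
      simp [Fintype.card_fin]
    · rintro ⟨j, l⟩
      rw [Fintype.sum_prod_type]
      have : ∀ i : Fin Kt, ∑ k, Pf (i, k) (j, l) = P i j * unif (Fin b') l := by
        intro i
        have h1 : ∑ k, Pf (i, k) (j, l) = P i j * ∑ k, π i j k l := by
          simp [hPf, Finset.mul_sum]
        rw [h1, (hπc i j).2.2 l]
      simp only [this]
      rw [← Finset.sum_mul, hP2 j]
      simp only [unif, hcard']
      have h1 : (Kv : ℝ) ≠ 0 := by positivity
      have h2 : (b' : ℝ) ≠ 0 := by positivity
      field_simp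
      simp [Fintype.card_fin]
  calc OTcost (unif (Fin Kt × Fin b)) (unif (Fin Kv × Fin b')) C
      ≤ ∑ p, ∑ q, Pf p q * C p q := OTcost_le_of_coupling hC hPfc
    _ = ∑ i, ∑ j, P i j * ∑ k, ∑ l, π i j k l * C (i, k) (j, l) := by
        simp only [hPf, Fintype.sum_prod_type]
        refine Finset.sum_congr rfl fun i _ => ?_
        rw [Finset.sum_comm]
        refine Finset.sum_congr rfl fun j _ => ?_
        simp only [Finset.mul_sum, mul_assoc]
    _ ≤ ∑ i, ∑ j, P i j *
          (OTcost (unif (Fin b)) (unif (Fin b')) (fun k l => C (i, k) (j, l)) + ε) := by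
        refine Finset.sum_le_sum fun i _ => Finset.sum_le_sum fun j _ => ?_
        exact mul_le_mul_of_nonneg_left (le_of_lt (hπlt i j)) (hPpos i j)
    _ = (∑ i, ∑ j, P i j *
          OTcost (unif (Fin b)) (unif (Fin b')) (fun k l => C (i, k) (j, l))) + ε := by
        have hsum : ∑ i, ∑ j, P i j = 1 := by
          rw [show ∑ i, ∑ j, P i j = ∑ i, unif (Fin Kt) i from
            Finset.sum_congr rfl fun i _ => hP1 i, sum_unif]
        simp only [mul_add, Finset.sum_add_distrib]
        congr 1
        simp only [← Finset.sum_mul]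
        rw [hsum, one_mul]
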